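/- Let F be a finite field and let R be a Dedekind domain that is finitely generated as an F-algebra. Then for every nonzero ideal a of R, the quotient ring R/a is finite. -/

import Mathlib

/-- A quotient by a maximal ideal of a finite-type algebra over a finite field
is finite (Nullstellensatz). -/
lemma quotient_finite_of_isMaximal {F R : Type*} [Field F] [Finite F]
    [CommRing R] [Algebra F R] (hfg : Algebra.FiniteType F R)
    (p : Ideal R) (hp : p.IsMaximal) : Finite (R ⧸ p) := by
  letI : Field (R ⧸ p) := Ideal.Quotient.field p
  haveI : Algebra.FiniteType F (R ⧸ p) :=
    Algebra.FiniteType.of_surjective (Ideal.Quotient.mkₐ F p)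
      (Ideal.Quotient.mkₐ_surjective F p)
  haveI : Module.Finite F (R ⧸ p) := finite_of_finite_type_of_isJacobsonRing F (R ⧸ p)
  exact Module.finite_of_finite F

/-- If `R` is a Dedekind domain which is a finitely generated algebra over a
finite field `F`, then for every nonzero ideal `a` of `R` the quotient ring
`R/a` is finite. -/
theorem quotient_finite_of_ne_zero {F R : Type*} [Field F] [Finite F]
    [CommRing R] [IsDedekindDomain R] [Algebra F R]
    (hfg : Algebra.FiniteType F R) (a : Ideal R) (ha : a ≠ 0) :
    Finite (R ⧸ a) := by
  induction a using UniqueFactorizationMonoid.induction_on_prime with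
  | h₁ => exact absurd rfl ha
  | h₂ a hu =>
      have : a = ⊤ := by
        simpa using (Ideal.isUnit_iff.mp hu)
      subst this
      exact Finite.of_subsingleton
  | h₃ b p hb hp ih =>
      -- `p` is a nonzero prime ideal, hence maximal
      have hpP : p.IsPrime := Ideal.isPrime_of_prime hp
      have hpm : p.IsMaximal := hpP.isMaximal hp.ne_zero
      haveI : Finite (R ⧸ p) := quotient_finite_of_isMaximal hfg p hpm
      haveI hRb : Finite (R ⧸ b) := ih hb
      -- consider the kernel ideal `b / (p*b)` in `R ⧸ (p*b)`
      set I : Ideal (R ⧸ (p * b)) := b.map (Ideal.Quotient.mk (p * b)) with hI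
      have hle : p * b ≤ b := Ideal.mul_le_right
      haveI : Finite ((R ⧸ (p * b)) ⧸ I) :=
        Finite.of_equiv _ (DoubleQuot.quotQuotEquivQuotOfLE hle).symm.toEquiv
      -- `I` is a finitely generated module over `R`
      haveI : Module.Finite (R ⧸ (p * b)) I :=
        Module.Finite.iff_fg.mpr (IsNoetherian.noetherian I)
      haveI : Module.Finite R (R ⧸ (p * b)) := Module.Finite.of_surjective
        (Ideal.Quotient.mkₐ R (p * b)).toLinearMap Ideal.Quotient.mk_surjective
      haveI : Module.Finite R I := Module.Finite.trans (R ⧸ (p * b)) I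
      -- `I` is killed by `p`, so it is a module over the finite field `R ⧸ p`
      have htor : Module.IsTorsionBySet R I (p : Set R) := by
        intro x c
        obtain ⟨y, hy, hyx⟩ :=
          (Ideal.mem_map_iff_of_surjective _ Ideal.Quotient.mk_surjective).mp x.2
        ext
        show (c : R) • (x : R ⧸ (p * b)) = 0
        rw [← hyx, Algebra.smul_def, ← Ideal.Quotient.algebraMap_eq, ← map_mul,
          Ideal.Quotient.algebraMap_eq, Ideal.Quotient.eq_zero_iff_mem]
        exact Ideal.mul_mem_mul c.2 hy
      letI : Module (R ⧸ p) I := htor.module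
      haveI : IsScalarTower R (R ⧸ p) I := htor.isScalarTower
      haveI : Module.Finite (R ⧸ p) I :=
        Module.Finite.of_restrictScalars_finite R (R ⧸ p) I
      haveI : Finite I := Module.finite_of_finite (R ⧸ p)
      -- conclude using the extension `0 → I → R⧸(p*b) → (R⧸(p*b))⧸I → 0`
      exact Finite.of_ideal_quotient I
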